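/- Let G be an unmixed chordal graph on [n], let F_1,...,F_m be the facets of Δ(G) with free vertices, let W = {v_1,...,v_m} consist of one chosen free vertex v_i from each F_i, and set B = [n] \ (F_1 ∪ ... ∪ F_m). Then for every minimal vertex cover X of the induced subgraph G|_B, the set X ∪ ((F_1 ∪ ... ∪ F_m) \ W) is a minimal vertex cover of G; in particular the induced subgraph G|_B is again unmixed. -/

import Mathlib

set_option maxHeartbeats 1000000
set_option synthInstance.maxHeartbeats 400000

open MvPolynomial

/-- A simple graph is chordal if every cycle of length > 3 has a chord, i.e. an edge of the
graph joining two vertices of the cycle which is not an edge of the cycle. -/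
def SimpleGraph.IsChordal {V : Type*} (G : SimpleGraph V) : Prop :=
  ∀ (v : V) (c : G.Walk v v), c.IsCycle → 3 < c.length →
    ∃ u w, u ∈ c.support ∧ w ∈ c.support ∧ G.Adj u w ∧ s(u, w) ∉ c.edges

/-- `F` is a facet of the clique complex `Δ(G)`, i.e. a maximal clique of `G`. -/
def SimpleGraph.IsFacet {V : Type*} (G : SimpleGraph V) (F : Finset V) : Prop :=
  G.IsClique (F : Set V) ∧ ∀ F' : Finset V, G.IsClique (F' : Set V) → F ⊆ F' → F' = F

/-- `v` is a free vertex of the facet `F` of `Δ(G)`: it belongs to no other facet. -/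
def SimpleGraph.IsFreeVertex {V : Type*} (G : SimpleGraph V) (F : Finset V) (v : V) : Prop :=
  v ∈ F ∧ ∀ F' : Finset V, G.IsFacet F' → v ∈ F' → F' = F

/-- `F` is a facet of `Δ(G)` admitting a free vertex. -/
def SimpleGraph.IsFreeFacet {V : Type*} (G : SimpleGraph V) (F : Finset V) : Prop :=
  G.IsFacet F ∧ ∃ v, G.IsFreeVertex F v

/-- A vertex cover of `G`: a set of vertices meeting every edge. -/
def SimpleGraph.IsVertexCover' {V : Type*} (G : SimpleGraph V) (C : Finset V) : Prop :=
  ∀ u w, G.Adj u w → u ∈ C ∨ w ∈ C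

/-- A minimal vertex cover of `G`: no proper subset is a vertex cover. -/
def SimpleGraph.IsMinVertexCover {V : Type*} (G : SimpleGraph V) (C : Finset V) : Prop :=
  G.IsVertexCover' C ∧ ∀ C' ⊆ C, G.IsVertexCover' C' → C' = C

/-- `G` is unmixed: all minimal vertex covers of `G` have the same cardinality. -/
def SimpleGraph.Unmixed {V : Type*} (G : SimpleGraph V) : Prop :=
  ∀ C C' : Finset V, G.IsMinVertexCover C → G.IsMinVertexCover C' → C.card = C'.card

/-- The induced subgraph of `G` on a subset `B` of the vertices, viewed as a graph on the
same vertex set (vertices outside `B` become isolated). -/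
def SimpleGraph.restrictTo {V : Type*} (G : SimpleGraph V) (B : Finset V) : SimpleGraph V where
  Adj u w := G.Adj u w ∧ u ∈ B ∧ w ∈ B
  symm := ⟨fun _ _ h => ⟨h.1.symm, h.2.2, h.2.1⟩⟩
  loopless := ⟨fun u h => G.loopless.irrefl u h.1⟩


lemma exists_facet_superset {n : ℕ} (G : SimpleGraph (Fin n)) (s : Finset (Fin n))
    (hs : G.IsClique (s : Set (Fin n))) : ∃ Fc : Finset (Fin n), G.IsFacet Fc ∧ s ⊆ Fc := by
  classical
  set T : Finset (Finset (Fin n)) :=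
    Finset.univ.filter (fun Fc => s ⊆ Fc ∧ G.IsClique (Fc : Set (Fin n))) with hT
  have hsT : s ∈ T := by simp [hT, hs]
  obtain ⟨Fc, hFcT, hmax⟩ := T.exists_max_image Finset.card ⟨s, hsT⟩
  simp only [hT, Finset.mem_filter, Finset.mem_univ, true_and] at hFcT hmax
  refine ⟨Fc, ⟨hFcT.2, fun F' hF' hsub => ?_⟩, hFcT.1⟩
  have : F'.card ≤ Fc.card := hmax F' ⟨hFcT.1.trans hsub, hF'⟩
  exact (Finset.eq_of_subset_of_card_le hsub this).symm

/-- Let `G` be an unmixed chordal graph on `[n]`, `F_1,…,F_m` the facets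
of `Δ(G)` with free vertices, `W = {v_1,…,v_m}` a choice of one free vertex in each `F_i`,
and `B = [n] \ (F_1 ∪ ⋯ ∪ F_m)`.  Then for every minimal vertex cover `X` of `G|_B`, the
set `X ∪ ((F_1 ∪ ⋯ ∪ F_m) \ W)` is a minimal vertex cover of `G`; in particular `G|_B`
is unmixed. -/
theorem minimal_cover_extension {n : ℕ} (G : SimpleGraph (Fin n))
    (hchordal : G.IsChordal) (hiso : ∀ v : Fin n, ∃ w, G.Adj v w)
    (hunmixed : G.Unmixed) {m : ℕ} (F : Fin m → Finset (Fin n))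
    (hFfree : ∀ i, G.IsFreeFacet (F i)) (hFinj : Function.Injective F)
    (hFall : ∀ F' : Finset (Fin n), G.IsFreeFacet F' → ∃ i, F' = F i)
    (v : Fin m → Fin n) (hv : ∀ j, G.IsFreeVertex (F j) (v j)) :
    (∀ X : Finset (Fin n),
      (G.restrictTo (Finset.univ \ Finset.univ.biUnion F)).IsMinVertexCover X →
      G.IsMinVertexCover
        (X ∪ (Finset.univ.biUnion F \ Finset.image v Finset.univ))) ∧
    (G.restrictTo (Finset.univ \ Finset.univ.biUnion F)).Unmixed := by
  classical
  set U : Finset (Fin n) := Finset.univ.biUnion F with hU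
  set Wv : Finset (Fin n) := Finset.image v Finset.univ with hWv
  set B : Finset (Fin n) := Finset.univ \ U with hB
  set C0 : Finset (Fin n) := U \ Wv with hC0
  -- key: if u is adjacent to w and u ∈ Wv, then w ∈ C0
  have key : ∀ u w : Fin n, G.Adj u w → u ∈ Wv → w ∈ C0 := by
    intro u w huw hu
    obtain ⟨j, -, hj⟩ := Finset.mem_image.mp hu
    subst hj
    have hpair : G.IsClique (({v j, w} : Finset (Fin n)) : Set (Fin n)) := by
      rw [Finset.coe_insert, Finset.coe_singleton]
      exact SimpleGraph.isClique_pair.mpr (fun _ => huw)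
    obtain ⟨Fc, hFc, hsub⟩ := exists_facet_superset G _ hpair
    have hvj : v j ∈ Fc := hsub (by simp)
    have hwF : w ∈ Fc := hsub (by simp)
    have hFcj : Fc = F j := (hv j).2 Fc hFc hvj
    rw [hC0, Finset.mem_sdiff]
    constructor
    · exact Finset.mem_biUnion.mpr ⟨j, Finset.mem_univ j, hFcj ▸ hwF⟩
    · intro hwW
      obtain ⟨k, -, hk⟩ := Finset.mem_image.mp hwW
      have hFjk : F j = F k := (hv k).2 (F j) (hFfree j).1 (hk ▸ hFcj ▸ hwF)
      have : j = k := hFinj hFjk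
      subst this
      exact G.ne_of_adj huw hk
  -- any minimal vertex cover of the restriction is contained in B
  have hXsub : ∀ X : Finset (Fin n),
      (G.restrictTo B).IsMinVertexCover X → X ⊆ B := by
    intro X hX
    have hfil : X.filter (· ∈ B) = X := by
      apply hX.2 _ (Finset.filter_subset _ _)
      intro a b hab
      rcases hX.1 a b hab with h | h
      · exact Or.inl (Finset.mem_filter.mpr ⟨h, hab.2.1⟩)
      · exact Or.inr (Finset.mem_filter.mpr ⟨h, hab.2.2⟩)
    intro x hx
    rw [← hfil] at hx
    exact (Finset.mem_filter.mp hx).2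
  have hC0U : C0 ⊆ U := Finset.sdiff_subset
  have main : ∀ X : Finset (Fin n), (G.restrictTo B).IsMinVertexCover X →
      G.IsMinVertexCover (X ∪ C0) := by
    intro X hX
    have hXB : X ⊆ B := hXsub X hX
    constructor
    · -- it is a vertex cover
      intro a b hab
      by_cases haB : a ∈ B
      · by_cases hbB : b ∈ B
        · rcases hX.1 a b ⟨hab, haB, hbB⟩ with h | h
          · exact Or.inl (Finset.mem_union_left _ h)
          · exact Or.inr (Finset.mem_union_left _ h)
        · -- b ∈ U
          by_cases hbW : b ∈ Wv
          · exact Or.inl (Finset.mem_union_right _ (key b a hab.symm hbW))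
          · have hbU : b ∈ U := by
              by_contra hbU
              exact hbB (Finset.mem_sdiff.mpr ⟨Finset.mem_univ b, hbU⟩)
            exact Or.inr (Finset.mem_union_right _ (Finset.mem_sdiff.mpr ⟨hbU, hbW⟩))
      · by_cases haW : a ∈ Wv
        · exact Or.inr (Finset.mem_union_right _ (key a b hab haW))
        · have haU : a ∈ U := by
            by_contra haU
            exact haB (Finset.mem_sdiff.mpr ⟨Finset.mem_univ a, haU⟩)
          exact Or.inl (Finset.mem_union_right _ (Finset.mem_sdiff.mpr ⟨haU, haW⟩))
    · -- minimality
      intro C' hsub hcov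
      apply Finset.Subset.antisymm hsub
      intro x hx
      rcases Finset.mem_union.mp hx with hxX | hxC0
      · -- x ∈ X : use that C' ∩ B is a cover of the restriction
        have hCB : C' ∩ B = X := by
          apply hX.2
          · intro y hy
            have hy' := Finset.mem_inter.mp hy
            rcases Finset.mem_union.mp (hsub hy'.1) with h | h
            · exact h
            · exact absurd (hC0U h) (Finset.mem_sdiff.mp hy'.2).2.elim
          · intro a b hab
            rcases hcov a b hab.1 with h | h
            · exact Or.inl (Finset.mem_inter.mpr ⟨h, hab.2.1⟩)
            · exact Or.inr (Finset.mem_inter.mpr ⟨h, hab.2.2⟩)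
        rw [← hCB] at hxX
        exact (Finset.mem_inter.mp hxX).1
      · -- x ∈ C0 : x ∈ F i \ Wv; edge from x to v i
        have hxU : x ∈ U := (Finset.mem_sdiff.mp hxC0).1
        have hxW : x ∉ Wv := (Finset.mem_sdiff.mp hxC0).2
        obtain ⟨i, -, hxFi⟩ := Finset.mem_biUnion.mp hxU
        have hvi : v i ∈ F i := (hv i).1
        have hxvi : x ≠ v i := by
          intro h
          exact hxW (Finset.mem_image.mpr ⟨i, Finset.mem_univ i, h.symm⟩)
        have hadj : G.Adj x (v i) := (hFfree i).1.1 (by exact_mod_cast hxFi)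
          (by exact_mod_cast hvi) hxvi
        rcases hcov x (v i) hadj with h | h
        · exact h
        · exfalso
          rcases Finset.mem_union.mp (hsub h) with h' | h'
          · have : v i ∈ B := hXB h'
            exact (Finset.mem_sdiff.mp this).2
              (Finset.mem_biUnion.mpr ⟨i, Finset.mem_univ i, hvi⟩)
          · exact (Finset.mem_sdiff.mp h').2
              (Finset.mem_image.mpr ⟨i, Finset.mem_univ i, rfl⟩)
  refine ⟨main, ?_⟩
  intro X X' hX hX'
  have h1 := main X hX
  have h2 := main X' hX'
  have hcards := hunmixed _ _ h1 h2
  have hd : ∀ Y : Finset (Fin n), Y ⊆ B → (Y ∪ C0).card = Y.card + C0.card := by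
    intro Y hYB
    apply Finset.card_union_of_disjoint
    apply Finset.disjoint_left.mpr
    intro a haY haC0
    exact (Finset.mem_sdiff.mp (hYB haY)).2 (hC0U haC0)
  rw [hd X (hXsub X hX), hd X' (hXsub X' hX')] at hcards
  omega
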